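/- arXiv:1405.1303 — 2 statements merged into one kernel-verified Lean document; each statement's English description precedes it below -/
import Mathlib

section
/- Fix δ ∈ (0,1) and τ ∈ (0,1). Suppose that every n × n complex matrix Z with |z_ij - 1| ≤ δ for all i,j satisfies per Z ≠ 0 and |per Z| ≥ τ Σ_{j=1}^n |z_{1j}| |per Z_j|, where Z_j is obtained by deleting row 1 and column j. Then for any two n × n matrices A, B in this polydisc that differ only in the first row, there is a continuous branch of log per along the segment from A to B, and |log per A - log per B| ≤ 2δ / ((1-δ)τ); in particular the angle between the complex numbers per A and per B is at most 2δ / ((1-δ)τ). -/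
/-- The permanent of a square matrix. -/
noncomputable def perm {n : ℕ} (A : Matrix (Fin n) (Fin n) ℂ) : ℂ :=
  ∑ σ : Equiv.Perm (Fin n), ∏ i, A i (σ i)

open Matrix


lemma perm_eq_sum' {n : ℕ} (A : Matrix (Fin n) (Fin n) ℂ) :
    perm A = ∑ σ : Equiv.Perm (Fin n), ∏ i, A (σ i) i := by
  rw [perm]
  refine Fintype.sum_equiv (Equiv.inv (Equiv.Perm (Fin n))) _ _ fun σ => ?_
  rw [← Equiv.prod_comp σ fun i => A ((Equiv.inv (Equiv.Perm (Fin n)) σ) i) i]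
  simp

lemma perm_transpose {n : ℕ} (A : Matrix (Fin n) (Fin n) ℂ) :
    perm Aᵀ = perm A := by
  rw [perm_eq_sum' Aᵀ, perm]
  simp [Matrix.transpose_apply]

lemma perm_succ_column_zero {n : ℕ} (Z : Matrix (Fin (n + 1)) (Fin (n + 1)) ℂ) :
    perm Z = ∑ i : Fin (n + 1), Z i 0 * perm (Z.submatrix i.succAbove Fin.succ) := by
  rw [perm_eq_sum', Finset.univ_perm_fin_succ, ← Finset.univ_product_univ]
  simp only [Finset.sum_map, Equiv.toEmbedding_apply, Finset.sum_product]
  refine Finset.sum_congr rfl fun i _ => Fin.cases ?_ (fun i => ?_) i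
  · rw [perm_eq_sum', Finset.mul_sum]
    refine Finset.sum_congr rfl fun σ _ => ?_
    rw [Fin.prod_univ_succ]
    simp [Equiv.Perm.decomposeFin_symm_apply_zero, Equiv.Perm.decomposeFin_symm_apply_succ,
      Matrix.submatrix_apply, Fin.succAbove_zero]
  · rw [perm_eq_sum', Finset.mul_sum]
    refine Fintype.sum_equiv (Equiv.mulLeft i.cycleRange) _ _ fun σ => ?_
    rw [Fin.prod_univ_succ]
    simp only [Equiv.Perm.decomposeFin_symm_apply_zero, Equiv.Perm.decomposeFin_symm_apply_succ,
      Matrix.submatrix_apply, Equiv.coe_mulLeft, Equiv.Perm.coe_mul, Function.comp_apply,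
      Fin.succAbove_cycleRange]

lemma perm_succ_row_zero {n : ℕ} (Z : Matrix (Fin (n + 1)) (Fin (n + 1)) ℂ) :
    perm Z = ∑ j : Fin (n + 1), Z 0 j * perm (Z.submatrix Fin.succ j.succAbove) := by
  rw [← perm_transpose Z, perm_succ_column_zero]
  refine Finset.sum_congr rfl fun j _ => ?_
  rw [← perm_transpose (Z.submatrix Fin.succ j.succAbove)]
  simp [Matrix.transpose_submatrix]


theorem angle_bound_of_row_change (n : ℕ) (δ τ : ℝ)
    (hδ : 0 < δ) (hδ1 : δ < 1) (hτ : 0 < τ) (hτ1 : τ < 1)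
    (H : ∀ Z : Matrix (Fin (n + 1)) (Fin (n + 1)) ℂ,
      (∀ i j, ‖Z i j - 1‖ ≤ δ) →
        perm Z ≠ 0 ∧
        ‖perm Z‖ ≥
          τ * ∑ j, ‖Z 0 j‖ *
            ‖perm (Z.submatrix Fin.succ j.succAbove)‖)
    (A B : Matrix (Fin (n + 1)) (Fin (n + 1)) ℂ)
    (hA : ∀ i j, ‖A i j - 1‖ ≤ δ)
    (hB : ∀ i j, ‖B i j - 1‖ ≤ δ)
    (hAB : ∀ i, i ≠ 0 → ∀ j, A i j = B i j) :
    (∃ L : ℝ → ℂ, Continuous L ∧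
        (∀ t ∈ Set.Icc (0 : ℝ) 1,
          Complex.exp (L t) = perm ((1 - t) • A + t • B)) ∧
        ‖L 0 - L 1‖ ≤ 2 * δ / ((1 - δ) * τ)) ∧
      |Complex.arg (perm A / perm B)| ≤ 2 * δ / ((1 - δ) * τ) := by
  have hδ1' : (0:ℝ) < 1 - δ := by linarith
  set K : ℝ := 2 * δ / ((1 - δ) * τ) with hKdef
  have hK0 : 0 ≤ K := by positivity
  set M : Fin (n + 1) → ℂ := fun j => perm (A.submatrix Fin.succ j.succAbove) with hMdef
  set S : ℝ := ∑ j, ‖M j‖ with hSdef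
  have hsubB : ∀ j : Fin (n+1), B.submatrix Fin.succ j.succAbove = A.submatrix Fin.succ j.succAbove := by
    intro j; ext i k
    simp only [Matrix.submatrix_apply]
    exact (hAB i.succ (Fin.succ_ne_zero i) _).symm
  set Z : ℝ → Matrix (Fin (n + 1)) (Fin (n + 1)) ℂ := fun t => (1 - t) • A + t • B with hZdef
  have hZsub : ∀ (t : ℝ) (j : Fin (n+1)), (Z t).submatrix Fin.succ j.succAbove = A.submatrix Fin.succ j.succAbove := by
    intro t j; ext i k
    simp only [hZdef, Matrix.submatrix_apply, Matrix.add_apply, Matrix.smul_apply]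
    rw [← hAB i.succ (Fin.succ_ne_zero i), ← add_smul]
    norm_num
  set pA := perm A with hpA
  set pB := perm B with hpB
  set w : ℂ := pB - pA with hwdef
  set f : ℝ → ℂ := fun t => pA + (t : ℂ) * w with hfdef
  have hexpA : pA = ∑ j, A 0 j * M j := perm_succ_row_zero A
  have hexpB : pB = ∑ j, B 0 j * M j := by
    rw [hpB, perm_succ_row_zero B]
    exact Finset.sum_congr rfl fun j _ => by rw [hsubB]
  have hfZ : ∀ t : ℝ, perm (Z t) = f t := by
    intro t
    rw [perm_succ_row_zero (Z t)]
    have : ∀ j : Fin (n+1), (Z t) 0 j * perm ((Z t).submatrix Fin.succ j.succAbove)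
        = ((1 - (t:ℂ)) * A 0 j + (t:ℂ) * B 0 j) * M j := by
      intro j
      rw [hZsub]
      simp only [hZdef, Matrix.add_apply, Matrix.smul_apply, Complex.real_smul]
      push_cast
      ring
    rw [Finset.sum_congr rfl fun j _ => this j]
    simp only [hfdef, hwdef, hexpA, hexpB, Finset.mul_sum, ← Finset.sum_sub_distrib,
      ← Finset.sum_add_distrib]
    exact Finset.sum_congr rfl fun j _ => by ring
  have hZmem : ∀ t ∈ Set.Icc (0:ℝ) 1, ∀ i j, ‖Z t i j - 1‖ ≤ δ := by
    intro t ht i j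
    have he : Z t i j - 1 = ((1 - t : ℝ) : ℂ) * (A i j - 1) + ((t : ℝ) : ℂ) * (B i j - 1) := by
      simp only [hZdef, Matrix.add_apply, Matrix.smul_apply, Complex.real_smul]
      push_cast
      ring
    rw [he]
    calc ‖((1 - t : ℝ) : ℂ) * (A i j - 1) + ((t : ℝ) : ℂ) * (B i j - 1)‖
        ≤ ‖((1 - t : ℝ) : ℂ) * (A i j - 1)‖
          + ‖((t : ℝ) : ℂ) * (B i j - 1)‖ := norm_add_le _ _
      _ = |1 - t| * ‖A i j - 1‖ + |t| * ‖B i j - 1‖ := by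
          rw [norm_mul, norm_mul, Complex.norm_real, Complex.norm_real, Real.norm_eq_abs, Real.norm_eq_abs]
      _ ≤ (1 - t) * δ + t * δ := by
          rw [abs_of_nonneg (by linarith [ht.2] : (0:ℝ) ≤ 1 - t), abs_of_nonneg ht.1]
          have h1 := hA i j; have h2 := hB i j
          have h3 := ht.1; have h4 := ht.2
          nlinarith [norm_nonneg (A i j - 1), norm_nonneg (B i j - 1)]
      _ = δ := by ring
  have hH : ∀ t ∈ Set.Icc (0:ℝ) 1, f t ≠ 0 ∧ (1 - δ) * τ * S ≤ ‖f t‖ := by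
    intro t ht
    obtain ⟨h1, h2⟩ := H (Z t) (hZmem t ht)
    refine ⟨by rw [← hfZ]; exact h1, ?_⟩
    rw [← hfZ t]
    refine le_trans ?_ h2
    have hterm : ∀ j : Fin (n+1), (1 - δ) * ‖M j‖
        ≤ ‖Z t 0 j‖ * ‖perm ((Z t).submatrix Fin.succ j.succAbove)‖ := by
      intro j
      rw [hZsub]
      gcongr
      have h3 := hZmem t ht 0 j
      have h4 : (1:ℝ) ≤ ‖Z t 0 j‖ + ‖Z t 0 j - 1‖ := by
        calc (1:ℝ) = ‖Z t 0 j - (Z t 0 j - 1)‖ := by norm_num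
          _ ≤ _ := norm_sub_le _ _
      linarith
    calc (1 - δ) * τ * S = τ * ∑ j, (1 - δ) * ‖M j‖ := by
          rw [hSdef, Finset.mul_sum, Finset.mul_sum]
          exact Finset.sum_congr rfl fun j _ => by ring
      _ ≤ _ :=
          mul_le_mul_of_nonneg_left (Finset.sum_le_sum fun j _ => hterm j) hτ.le
  have hwS : ‖w‖ ≤ 2 * δ * S := by
    have : w = ∑ j, (B 0 j - A 0 j) * M j := by
      rw [hwdef, hexpA, hexpB, ← Finset.sum_sub_distrib]
      exact Finset.sum_congr rfl fun j _ => by ring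
    rw [this]
    calc ‖∑ j, (B 0 j - A 0 j) * M j‖
        ≤ ∑ j, ‖(B 0 j - A 0 j) * M j‖ := norm_sum_le _ _
      _ ≤ ∑ j, (2 * δ) * ‖M j‖ := by
          gcongr with j hj
          rw [norm_mul]
          gcongr
          have : B 0 j - A 0 j = (B 0 j - 1) - (A 0 j - 1) := by ring
          rw [this]
          calc ‖_‖ ≤ ‖B 0 j - 1‖ + ‖A 0 j - 1‖ :=
                norm_sub_le _ _
            _ ≤ 2 * δ := by linarith [hA 0 j, hB 0 j]
      _ = 2 * δ * S := by rw [hSdef, Finset.mul_sum]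
  have hratio : ∀ t ∈ Set.Icc (0:ℝ) 1, ‖w / f t‖ ≤ K := by
    intro t ht
    obtain ⟨h1, h2⟩ := hH t ht
    have hfpos : 0 < ‖f t‖ := by
      simpa [norm_pos_iff] using h1
    rw [norm_div, hKdef,
      div_le_div_iff₀ hfpos (by positivity)]
    calc ‖w‖ * ((1 - δ) * τ) ≤ 2 * δ * S * ((1 - δ) * τ) := by gcongr
      _ = 2 * δ * ((1 - δ) * τ * S) := by ring
      _ ≤ 2 * δ * ‖f t‖ := by gcongr
  -- separation of the segment from 0
  have hseg_sub : ∀ z ∈ segment ℝ pA pB, ∃ t ∈ Set.Icc (0:ℝ) 1, z = f t := by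
    intro z hz
    rw [segment_eq_image'] at hz
    obtain ⟨t, ht, rfl⟩ := hz
    exact ⟨t, ht, by simp [hfdef, hwdef, Complex.real_smul]⟩
  have hseg_mem : ∀ t ∈ Set.Icc (0:ℝ) 1, f t ∈ segment ℝ pA pB := by
    intro t ht
    rw [segment_eq_image']
    exact ⟨t, ht, by simp [hfdef, hwdef, Complex.real_smul]⟩
  have h0seg : (0:ℂ) ∉ segment ℝ pA pB := by
    intro h0
    obtain ⟨t, ht, h⟩ := hseg_sub 0 h0
    exact (hH t ht).1 h.symm
  obtain ⟨φ, u, v, hφu, huv, hvφ⟩ :=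
    geometric_hahn_banach_compact_closed (convex_segment pA pB)
      (by rw [segment_eq_image']
          exact isCompact_Icc.image (continuous_const.add (continuous_id.smul continuous_const)))
      (convex_singleton (0:ℂ)) isClosed_singleton
      (Set.disjoint_singleton_right.mpr h0seg)
  have hv0 : v < 0 := by simpa using hvφ 0 rfl
  have hφneg : ∀ z ∈ segment ℝ pA pB, φ z < 0 := fun z hz =>
    lt_trans (lt_trans (hφu z hz) huv) hv0
  have hφ_eq : ∀ z : ℂ, φ z = z.re * φ 1 + z.im * φ Complex.I := by
    intro z
    conv_lhs => rw [show z = z.re • (1:ℂ) + z.im • Complex.I by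
      simp [Complex.real_smul, Complex.re_add_im]]
    rw [map_add, φ.map_smul, φ.map_smul, smul_eq_mul, smul_eq_mul]
  set c : ℂ := -(↑(φ 1) + ↑(φ Complex.I) * Complex.I) with hcdef
  have hcre : c.re = -(φ 1) := by simp [hcdef]
  have hcim : c.im = -(φ Complex.I) := by simp [hcdef]
  have hcne : c ≠ 0 := by
    intro h
    have h1 : φ 1 = 0 := by have := congrArg Complex.re h; simp [hcre] at this; simpa using this
    have h2 : φ Complex.I = 0 := by
      have := congrArg Complex.im h; simp [hcim] at this; simpa using this
    have := hφneg pA (left_mem_segment ℝ pA pB)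
    rw [hφ_eq, h1, h2] at this
    simp at this
  have hdiv_re : ∀ z : ℂ, (z / c).re = -φ z / Complex.normSq c := by
    intro z
    rw [Complex.div_re, hφ_eq, hcre, hcim]
    ring
  have hpos : ∀ t ∈ Set.Icc (0:ℝ) 1, 0 < (f t / c).re := by
    intro t ht
    rw [hdiv_re]
    have h1 := hφneg (f t) (hseg_mem t ht)
    have h2 : 0 < Complex.normSq c := Complex.normSq_pos.mpr hcne
    exact div_pos (by linarith) h2
  have hslit : ∀ t ∈ Set.Icc (0:ℝ) 1, f t / c ∈ Complex.slitPlane := fun t ht =>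
    Or.inl (hpos t ht)
  -- the branch of log
  set g : ℝ → ℂ := fun t => Complex.log (f t / c) with hgdef
  set L : ℝ → ℂ := fun t => g (min 1 (max 0 t)) + Complex.log c with hLdef
  have hclamp_mem : ∀ t : ℝ, min 1 (max 0 t) ∈ Set.Icc (0:ℝ) 1 :=
    fun t => ⟨le_min zero_le_one (le_max_left 0 t), min_le_left 1 _⟩
  have hfcont : Continuous f := by
    simp only [hfdef]
    exact continuous_const.add (Complex.continuous_ofReal.mul continuous_const)
  have hLcont : Continuous L := by
    refine Continuous.add ?_ continuous_const
    refine Continuous.clog ?_ fun t => hslit _ (hclamp_mem t)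
    exact (hfcont.comp ((continuous_const.min (continuous_const.max continuous_id)))).div_const c
  have hexpL : ∀ t ∈ Set.Icc (0:ℝ) 1, Complex.exp (L t) = f t := by
    intro t ht
    have hcl : min 1 (max 0 t) = t := by
      rw [max_eq_right ht.1, min_eq_right ht.2]
    simp only [hLdef, hcl, Complex.exp_add, hgdef]
    rw [Complex.exp_log (div_ne_zero (hH t ht).1 hcne), Complex.exp_log hcne,
      div_mul_cancel₀ _ hcne]
  -- derivative bound
  have hderiv : ∀ t ∈ Set.Icc (0:ℝ) 1,
      HasDerivWithinAt g (w / f t) (Set.Icc (0:ℝ) 1) t := by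
    intro t ht
    have h0 : HasDerivAt (fun s : ℝ => (s : ℂ)) 1 t := by
      simpa using (hasDerivAt_id t).ofReal_comp
    have h1 : HasDerivAt (fun s : ℝ => f s / c) (w / c) t := by
      have := ((h0.mul_const w).const_add pA).div_const c
      simpa [hfdef] using this
    have h2 : HasDerivAt Complex.log (f t / c)⁻¹ (f t / c) :=
      Complex.hasDerivAt_log (hslit t ht)
    have h3 : HasDerivWithinAt g ((f t / c)⁻¹ * (w / c)) (Set.Icc (0:ℝ) 1) t :=
      by have := (h2.comp t h1).hasDerivWithinAt (s := Set.Icc (0:ℝ) 1); exact this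
    have h4 : (f t / c)⁻¹ * (w / c) = w / f t := by
      have hfne : f t ≠ 0 := (hH t ht).1
      rw [inv_div, div_mul_div_comm, mul_comm c w, mul_comm (f t) c,
        mul_comm w c, mul_div_mul_left _ _ hcne]
    rw [h4] at h3
    exact h3
  have hgbound : ‖g 1 - g 0‖ ≤ K := by
    have := Convex.norm_image_sub_le_of_norm_hasDerivWithin_le
      (f := g) (f' := fun t => w / f t) (C := K) hderiv hratio (convex_Icc 0 1)
      (Set.left_mem_Icc.mpr zero_le_one) (Set.right_mem_Icc.mpr zero_le_one)
    simpa using this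
  have hL01 : L 0 - L 1 = g 0 - g 1 := by
    simp only [hLdef]
    norm_num
  have hLbound : ‖L 0 - L 1‖ ≤ K := by
    rw [hL01, norm_sub_rev]
    exact hgbound
  -- conclusion
  refine ⟨⟨L, hLcont, fun t ht => by rw [hexpL t ht, ← hfZ t], hLbound⟩, ?_⟩
  have hfA : f 0 = pA := by simp [hfdef]
  have hfB : f 1 = pB := by simp [hfdef, hwdef]
  have hquot : pA / pB = Complex.exp (L 0 - L 1) := by
    rw [Complex.exp_sub, hexpL 0 (Set.left_mem_Icc.mpr zero_le_one),
      hexpL 1 (Set.right_mem_Icc.mpr zero_le_one), hfA, hfB]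
  rw [hquot]
  set z := L 0 - L 1 with hzdef
  have hzK : ‖z‖ ≤ K := hLbound
  rcases le_or_gt Real.pi K with hπ | hπ
  · exact le_trans (Complex.abs_arg_le_pi _) hπ
  · have him : |z.im| ≤ K := le_trans (Complex.abs_im_le_norm z) hzK
    have harg : Complex.arg (Complex.exp z) = z.im := by
      rw [Complex.exp_eq_exp_re_mul_sin_add_cos, ← Complex.ofReal_exp,
        Complex.arg_real_mul _ (Real.exp_pos _), Complex.arg_cos_add_sin_mul_I]
      constructor
      · have := abs_le.mp him
        linarith
      · have := abs_le.mp him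
        linarith
    rw [harg]
    exact him
end

section
/- Fix δ ∈ (0,1) and 0 ≤ θ < π/2 - 2 arcsin δ. Suppose that for any two n × n complex matrices A, B with all entries in the disc {w : |w - 1| ≤ δ} that differ in exactly one column, both per A and per B are non-zero and the angle between per A and per B is at most θ. Then for any (n+1) × (n+1) complex matrix Z with |z_ij - 1| ≤ δ for all i,j, one has |per Z| ≥ τ Σ_{j=1}^{n+1} |z_{1j}| |per Z_j|, where τ = sqrt(cos(θ + 2 arcsin δ)) and Z_j is obtained from Z by deleting the first row and j-th column. Assume additionally that per W ≠ 0 for every n × n matrix W with entries in the disc. -/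
private lemma perm_col_perm {n : ℕ} (M : Matrix (Fin n) (Fin n) ℂ) (q : Equiv.Perm (Fin n)) :
    perm (M.submatrix id ⇑q) = perm M := by
  unfold perm
  calc ∑ σ : Equiv.Perm (Fin n), ∏ i, M i (q (σ i))
      = ∑ σ : Equiv.Perm (Fin n), ∏ i, M i ((q * σ) i) := by
        refine Finset.sum_congr rfl fun σ _ => Finset.prod_congr rfl fun i _ => by
          rw [Equiv.Perm.mul_apply]
    _ = ∑ τ : Equiv.Perm (Fin n), ∏ i, M i (τ i) :=
        Equiv.sum_comp (Equiv.mulLeft q) (fun τ => ∏ i, M i (τ i))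

private lemma exists_factor {n : ℕ} (f : Fin n → Fin (n + 1)) (hf : Function.Injective f)
    (c : Fin (n + 1)) (hc : ∀ l, f l ≠ c) :
    ∃ q : Equiv.Perm (Fin n), ∀ l, f l = c.succAbove (q l) := by
  have hg : ∀ l, ∃ m, c.succAbove m = f l := fun l => Fin.exists_succAbove_eq (hc l)
  choose g hgspec using hg
  have hginj : Function.Injective g := fun a b hab => hf (by rw [← hgspec a, ← hgspec b, hab])
  exact ⟨Equiv.ofBijective g (Finite.injective_iff_bijective.mp hginj),
    fun l => (hgspec l).symm⟩

private lemma perm_expand {n : ℕ} (Z : Matrix (Fin (n + 1)) (Fin (n + 1)) ℂ) :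
    perm Z = ∑ j, Z 0 j * perm (Z.submatrix Fin.succ j.succAbove) := by
  unfold perm
  rw [← Equiv.sum_comp Equiv.Perm.decomposeFin.symm
    (fun σ : Equiv.Perm (Fin (n + 1)) => ∏ i, Z i (σ i)), Fintype.sum_prod_type]
  refine Finset.sum_congr rfl fun p _ => ?_
  have hstep : ∀ σ : Equiv.Perm (Fin n),
      (∏ i : Fin (n + 1), Z i ((Equiv.Perm.decomposeFin.symm (p, σ)) i))
      = Z 0 p * ∏ i : Fin n, Z i.succ ((Equiv.swap 0 p) (σ i).succ) := by
    intro σ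
    rw [Fin.prod_univ_succ]
    simp [Equiv.Perm.decomposeFin_symm_apply_zero, Equiv.Perm.decomposeFin_symm_apply_succ]
  simp only [hstep, ← Finset.mul_sum]
  congr 1
  set f : Fin n → Fin (n + 1) := fun m => Equiv.swap 0 p m.succ with hfdef
  have hfinj : Function.Injective f :=
    (Equiv.injective _).comp (Fin.succ_injective n)
  have hfc : ∀ l, f l ≠ p := by
    intro l h
    have h2 : Equiv.swap 0 p l.succ = Equiv.swap 0 p 0 := by
      rw [Equiv.swap_apply_left]; exact h
    exact Fin.succ_ne_zero l ((Equiv.swap 0 p).injective h2)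
  obtain ⟨q, hq⟩ := exists_factor f hfinj p hfc
  calc ∑ σ : Equiv.Perm (Fin n), ∏ i, Z i.succ (f (σ i))
      = ∑ σ : Equiv.Perm (Fin n), ∏ i, Z i.succ (p.succAbove ((q * σ) i)) := by
        refine Finset.sum_congr rfl fun σ _ => Finset.prod_congr rfl fun i _ => by
          rw [Equiv.Perm.mul_apply, ← hq]
    _ = ∑ τ : Equiv.Perm (Fin n), ∏ i, Z i.succ (p.succAbove (τ i)) :=
        Equiv.sum_comp (Equiv.mulLeft q) (fun τ => ∏ i, Z i.succ (p.succAbove (τ i)))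

private lemma disc_facts {δ : ℝ} (hδ1 : δ < 1) {z : ℂ} (hz : ‖z - 1‖ ≤ δ) :
    z ≠ 0 ∧ 0 < z.re ∧ |Complex.arg z| ≤ Real.arcsin δ := by
  have hδ0 : 0 ≤ δ := le_trans (norm_nonneg _) hz
  have hre : 0 < z.re := by
    have h1 : |(z - 1).re| ≤ ‖z - 1‖ := Complex.abs_re_le_norm _
    have h2 : (z - 1).re = z.re - 1 := by simp
    rw [h2] at h1
    have := abs_le.mp h1
    linarith [this.1]
  have hz0 : z ≠ 0 := fun h => by simp [h] at hre
  have habs : 0 < ‖z‖ := by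
    rwa [norm_pos_iff]
  -- |Im z| ≤ δ * |z|
  have hsq : (z.re - 1) ^ 2 + z.im ^ 2 ≤ δ ^ 2 := by
    have h1 : Complex.normSq (z - 1) ≤ δ ^ 2 := by
      have := mul_le_mul hz hz (norm_nonneg _) hδ0
      rwa [← Complex.sq_norm, sq, sq] at *
    have h2 : Complex.normSq (z - 1) = (z.re - 1) ^ 2 + z.im ^ 2 := by
      simp [Complex.normSq_apply]; ring
    linarith [h2 ▸ h1]
  have himsq : z.im ^ 2 ≤ δ ^ 2 * (‖z‖) ^ 2 := by
    have h3 : (‖z‖) ^ 2 = z.re ^ 2 + z.im ^ 2 := by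
      rw [Complex.sq_norm, Complex.normSq_apply]; ring
    rw [h3]
    have hmul : (1 - δ ^ 2) * ((z.re - 1) ^ 2 + z.im ^ 2) ≤ (1 - δ ^ 2) * δ ^ 2 :=
      mul_le_mul_of_nonneg_left hsq (by nlinarith)
    nlinarith [hmul, sq_nonneg (z.re - 1 + δ ^ 2)]
  have him : |z.im| ≤ δ * ‖z‖ := by
    have := Real.sqrt_le_sqrt himsq
    rwa [Real.sqrt_sq_eq_abs, show δ ^ 2 * (‖z‖) ^ 2 = (δ * ‖z‖) ^ 2 by ring,
      Real.sqrt_sq (by positivity)] at this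
  have hsin : |Real.sin (Complex.arg z)| ≤ δ := by
    rw [Complex.sin_arg, abs_div, abs_of_nonneg habs.le, div_le_iff₀ habs]
    exact him
  have hargpi2 : |Complex.arg z| < Real.pi / 2 :=
    Complex.abs_arg_lt_pi_div_two_iff.mpr (Or.inl hre)
  have hpi := Real.pi_pos
  have hsinabs : Real.sin |Complex.arg z| = |Real.sin (Complex.arg z)| := by
    rcases le_or_gt 0 (Complex.arg z) with h | h
    · rw [abs_of_nonneg h, abs_of_nonneg (Real.sin_nonneg_of_nonneg_of_le_pi h (by
        rw [abs_of_nonneg h] at hargpi2; linarith))]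
    · have h2 : 0 ≤ Real.sin (-Complex.arg z) :=
        Real.sin_nonneg_of_nonneg_of_le_pi (by linarith) (by
          rw [abs_of_neg h] at hargpi2; linarith)
      rw [Real.sin_neg] at h2
      rw [abs_of_neg h, Real.sin_neg, abs_of_nonpos (by linarith)]
  refine ⟨hz0, hre, ?_⟩
  have heq : Real.arcsin (Real.sin |Complex.arg z|) = |Complex.arg z| :=
    Real.arcsin_sin (by linarith [abs_nonneg (Complex.arg z)]) hargpi2.le
  rw [← heq, hsinabs]
  exact Real.monotone_arcsin hsin

theorem perm_lower_bound_of_angle_hypothesis (n : ℕ) (δ θ : ℝ)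
    (hδ : 0 < δ) (hδ1 : δ < 1) (hθ0 : 0 ≤ θ)
    (hθ : θ < Real.pi / 2 - 2 * Real.arcsin δ)
    (Hangle : ∀ A B : Matrix (Fin n) (Fin n) ℂ,
      (∀ i j, ‖A i j - 1‖ ≤ δ) →
      (∀ i j, ‖B i j - 1‖ ≤ δ) →
      (∃ j₀ : Fin n, ∀ j, j ≠ j₀ → ∀ i, A i j = B i j) →
        perm A ≠ 0 ∧ perm B ≠ 0 ∧ |Complex.arg (perm A / perm B)| ≤ θ)
    (Hnz : ∀ W : Matrix (Fin n) (Fin n) ℂ,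
      (∀ i j, ‖W i j - 1‖ ≤ δ) → perm W ≠ 0)
    (Z : Matrix (Fin (n + 1)) (Fin (n + 1)) ℂ)
    (hZ : ∀ i j, ‖Z i j - 1‖ ≤ δ) :
    ‖perm Z‖ ≥
      Real.sqrt (Real.cos (θ + 2 * Real.arcsin δ)) *
        ∑ j, ‖Z 0 j‖ *
          ‖perm (Z.submatrix Fin.succ j.succAbove)‖ := by
  have hpi := Real.pi_pos
  set s := Real.arcsin δ with hs
  have hs0 : 0 ≤ s := Real.arcsin_nonneg.mpr hδ.le
  set α := θ + 2 * s with hα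
  have hα0 : 0 ≤ α := by positivity
  have hαlt : α < Real.pi / 2 := by rw [hα]; linarith
  have hαpi : α ≤ Real.pi := by linarith
  have hcos : 0 < Real.cos α := Real.cos_pos_of_mem_Ioo ⟨by linarith, hαlt⟩
  set u : Fin (n + 1) → ℂ := fun j => Z 0 j * perm (Z.submatrix Fin.succ j.succAbove) with hu
  have hexp : perm Z = ∑ j, u j := perm_expand Z
  have key : ∀ j k : Fin (n + 1),
      Real.cos α * (‖u j‖ * ‖u k‖) ≤
        (u j * (starRingEnd ℂ) (u k)).re := by
    intro j k
    rcases eq_or_ne j k with rfl | hjk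
    · rw [Complex.mul_conj, Complex.ofReal_re, Complex.normSq_eq_norm_sq]
      nlinarith [norm_nonneg (u j), Real.cos_le_one α]
    · -- construct the matrices A and B and apply Hangle
      have hn : n ≠ 0 := by
        rintro rfl
        exact hjk (Fin.ext (by omega))
      have : NeZero n := ⟨hn⟩
      obtain ⟨m₁, hm₁⟩ := Fin.exists_succAbove_eq hjk.symm
      set f : Fin n → Fin (n + 1) := fun l => j.succAbove (Equiv.swap 0 m₁ l) with hfdef
      have hfinj : Function.Injective f :=
        Fin.succAbove_right_injective.comp (Equiv.injective _)
      have hf0 : f 0 = k := by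
        rw [hfdef]; simp only [Equiv.swap_apply_left]; exact hm₁
      have hfj : ∀ l, f l ≠ j := fun l => Fin.succAbove_ne j _
      set f' : Fin n → Fin (n + 1) := Function.update f 0 j with hf'def
      have hf'0 : f' 0 = j := by rw [hf'def]; simp
      have hf'ne : ∀ l, l ≠ 0 → f' l = f l := fun l hl => Function.update_of_ne hl j f
      have hf'inj : Function.Injective f' := by
        intro a b hab
        rcases eq_or_ne a 0 with rfl | ha
        · rcases eq_or_ne b 0 with rfl | hb
          · rfl
          · rw [hf'0, hf'ne b hb] at hab
            exact absurd hab.symm (hfj b)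
        · rcases eq_or_ne b 0 with rfl | hb
          · rw [hf'0, hf'ne a ha] at hab
            exact absurd hab (hfj a)
          · rw [hf'ne a ha, hf'ne b hb] at hab
            exact hfinj hab
      have hf'k : ∀ l, f' l ≠ k := by
        intro l h
        rcases eq_or_ne l 0 with rfl | hl
        · rw [hf'0] at h; exact hjk h
        · rw [hf'ne l hl] at h
          have : f l = f 0 := by rw [hf0]; exact h
          exact hl (hfinj this)
      obtain ⟨q', hq'⟩ := exists_factor f' hf'inj k hf'k
      set A : Matrix (Fin n) (Fin n) ℂ := Z.submatrix Fin.succ f with hAdef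
      set B : Matrix (Fin n) (Fin n) ℂ := Z.submatrix Fin.succ f' with hBdef
      have hApm : perm A = perm (Z.submatrix Fin.succ j.succAbove) := by
        have hAe : A = (Z.submatrix Fin.succ j.succAbove).submatrix id ⇑(Equiv.swap 0 m₁) := rfl
        rw [hAe, perm_col_perm]
      have hBpm : perm B = perm (Z.submatrix Fin.succ k.succAbove) := by
        have hBe : B = (Z.submatrix Fin.succ k.succAbove).submatrix id ⇑q' := by
          ext i l
          simp only [Matrix.submatrix_apply, id_eq, hBdef]
          rw [hq' l]
        rw [hBe, perm_col_perm]
      obtain ⟨hA0, hB0, harg⟩ := Hangle A B (fun i l => hZ _ _) (fun i l => hZ _ _)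
        ⟨0, fun l hl i => by
          simp only [hAdef, hBdef, Matrix.submatrix_apply]
          rw [hf'ne l hl]⟩
      rw [hApm] at hA0
      rw [hBpm] at hB0
      rw [hApm, hBpm] at harg
      -- now the angle computation
      obtain ⟨hz₁0, _, harg₁⟩ := disc_facts hδ1 (hZ 0 j)
      obtain ⟨hz₂0, hre₂, harg₂⟩ := disc_facts hδ1 (hZ 0 k)
      set z₁ := Z 0 j
      set z₂ := Z 0 k
      set P₁ := perm (Z.submatrix Fin.succ j.succAbove)
      set P₂ := perm (Z.submatrix Fin.succ k.succAbove)
      have hspi2 : s < Real.pi / 2 := by linarith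
      have harg₂' : Complex.arg z₂⁻¹ = -Complex.arg z₂ := by
        rw [Complex.arg_inv]
        have : Complex.arg z₂ ≠ Real.pi := by
          intro h
          rw [h] at harg₂
          rw [abs_of_nonneg hpi.le] at harg₂
          linarith
        simp [this]
      have hP₂0 : P₁ / P₂ ≠ 0 := div_ne_zero hA0 hB0
      have hstep1 : Complex.arg (z₁ * z₂⁻¹) = Complex.arg z₁ + Complex.arg z₂⁻¹ := by
        apply Complex.arg_mul hz₁0 (inv_ne_zero hz₂0)
        rw [harg₂']
        constructor
        · have := abs_le.mp harg₁
          have := abs_le.mp harg₂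
          linarith [this.2]
        · have h1 := (abs_le.mp harg₁).2
          have h2 := (abs_le.mp harg₂).1
          linarith
      have habs1 : |Complex.arg (z₁ * z₂⁻¹)| ≤ 2 * s := by
        rw [hstep1, harg₂']
        have h1 := abs_le.mp harg₁
        have h2 := abs_le.mp harg₂
        rw [abs_le]
        constructor <;> linarith [h1.1, h1.2, h2.1, h2.2]
      have hstep2 : Complex.arg (z₁ * z₂⁻¹ * (P₁ / P₂)) =
          Complex.arg (z₁ * z₂⁻¹) + Complex.arg (P₁ / P₂) := by
        apply Complex.arg_mul (mul_ne_zero hz₁0 (inv_ne_zero hz₂0)) hP₂0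
        have h1 := abs_le.mp habs1
        have h2 := abs_le.mp harg
        constructor
        · linarith [h1.1, h2.1]
        · linarith [h1.2, h2.2]
      have hargw : |Complex.arg (u j / u k)| ≤ α := by
        have hw : u j / u k = z₁ * z₂⁻¹ * (P₁ / P₂) := by
          rw [hu]
          field_simp
          exact div_eq_of_eq_mul (mul_ne_zero hz₂0 hB0) (by simp only [z₁, z₂, P₁, P₂]; ring)
        rw [hw, hstep2]
        have h1 := abs_le.mp habs1
        have h2 := abs_le.mp harg
        rw [abs_le, hα]
        constructor <;> linarith [h1.1, h1.2, h2.1, h2.2]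
      -- turn the angle bound into the real-part bound
      have huj : u j ≠ 0 := mul_ne_zero hz₁0 hA0
      have huk : u k ≠ 0 := mul_ne_zero hz₂0 hB0
      have hw0 : u j / u k ≠ 0 := div_ne_zero huj huk
      have hre : (u j * (starRingEnd ℂ) (u k)).re =
          ‖u j‖ * ‖u k‖ * Real.cos (Complex.arg (u j / u k)) := by
        have e1 : u j * (starRingEnd ℂ) (u k) = (u j / u k) * (Complex.normSq (u k) : ℂ) := by
          rw [← Complex.mul_conj]
          field_simp
        have habsj : ‖u j‖ ≠ 0 := by
          simpa [norm_ne_zero_iff] using huj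
        have habsk : ‖u k‖ ≠ 0 := by
          simpa [norm_ne_zero_iff] using huk
        rw [e1]
        rw [Complex.mul_re]
        simp only [Complex.ofReal_re, Complex.ofReal_im, mul_zero, sub_zero]
        rw [Complex.cos_arg hw0, Complex.normSq_eq_norm_sq, norm_div]
        field_simp
      rw [hre]
      have hcosge : Real.cos α ≤ Real.cos (Complex.arg (u j / u k)) := by
        rw [← Real.cos_abs (Complex.arg (u j / u k))]
        exact Real.cos_le_cos_of_nonneg_of_le_pi (abs_nonneg _) hαpi hargw
      have hnn : 0 ≤ ‖u j‖ * ‖u k‖ := by positivity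
      nlinarith
  -- geometric summation
  have h1 : Real.cos α * (∑ j, ‖u j‖) ^ 2 ≤ (‖∑ j, u j‖) ^ 2 := by
    have e1 : (‖∑ j, u j‖) ^ 2 =
        ∑ j, ∑ k, (u j * (starRingEnd ℂ) (u k)).re := by
      rw [Complex.sq_norm]
      have : ((∑ j, u j) * (starRingEnd ℂ) (∑ k, u k)).re =
          ∑ j, ∑ k, (u j * (starRingEnd ℂ) (u k)).re := by
        rw [map_sum, Finset.sum_mul_sum]
        rw [Complex.re_sum]
        exact Finset.sum_congr rfl fun j _ => Complex.re_sum _ _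
      rw [← this, Complex.mul_conj, Complex.ofReal_re]
    have e2 : Real.cos α * (∑ j, ‖u j‖) ^ 2 =
        ∑ j, ∑ k, Real.cos α * (‖u j‖ * ‖u k‖) := by
      rw [sq, Finset.sum_mul_sum, Finset.mul_sum]
      exact Finset.sum_congr rfl fun j _ => by rw [Finset.mul_sum]
    rw [e1, e2]
    exact Finset.sum_le_sum fun j _ => Finset.sum_le_sum fun k _ => key j k
  have hnn : 0 ≤ ∑ j, ‖u j‖ := Finset.sum_nonneg fun _ _ => norm_nonneg _
  have h2 : Real.sqrt (Real.cos α) * ∑ j, ‖u j‖ ≤ ‖∑ j, u j‖ := by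
    have h3 := Real.sqrt_le_sqrt h1
    rwa [Real.sqrt_mul hcos.le, Real.sqrt_sq hnn, Real.sqrt_sq (norm_nonneg _)] at h3
  rw [ge_iff_le, hexp]
  calc Real.sqrt (Real.cos (θ + 2 * Real.arcsin δ)) *
        ∑ j, ‖Z 0 j‖ * ‖perm (Z.submatrix Fin.succ j.succAbove)‖
      = Real.sqrt (Real.cos α) * ∑ j, ‖u j‖ := by
        rw [hα, hs]
        congr 1
        exact Finset.sum_congr rfl fun j _ => (norm_mul _ _).symm
    _ ≤ ‖∑ j, u j‖ := h2
end
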